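/- The quantity ( C(1,D) + D²/2 − (1/2)·D·log D ) / D converges to −1 + (1/2)·log(2π) as the integer D tends to infinity, where C(1,D) = Σ_{i+j=D} log( i!·j!/D! ) = −Σ_{m=0}^{D} log C(D,m). -/

import Mathlib

open Finset Filter

/-- `C(n,D) = Σ_{i_0+⋯+i_n = D} log((i_0!⋯i_n!)/D!)`; here with `n = 1`,
`C(1,D) = Σ_{i+j=D} log(i!·j!/D!) = −Σ_{m=0}^{D} log C(D,m)`. -/
noncomputable def Cconst (n D : ℕ) : ℝ :=
  ∑ i ∈ Finset.Nat.antidiagonalTuple (n + 1) D,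
    Real.log (((∏ k, Nat.factorial (i k) : ℕ) : ℝ) / (Nat.factorial D : ℝ))

noncomputable def Lf (d : ℕ) : ℝ := Real.log (Nat.factorial d)
noncomputable def ff (d : ℕ) : ℝ := Lf d - d * Real.log d + d
noncomputable def gg (d : ℕ) : ℝ :=
  ff d - (1/2) * Real.log d - (1/2) * Real.log (2 * Real.pi)

lemma Lf_succ (D : ℕ) : Lf (D+1) = Lf D + Real.log (D+1) := by
  unfold Lf
  rw [Nat.factorial_succ, Nat.cast_mul, Real.log_mul, add_comm]
  · push_cast; ring_nf
  · push_cast; positivity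
  · exact_mod_cast (Nat.factorial_pos D).ne'

lemma lemA (D : ℕ) :
    (∑ i ∈ Finset.Nat.antidiagonalTuple 2 D,
      Real.log (((∏ k, Nat.factorial (i k) : ℕ) : ℝ) / (Nat.factorial D : ℝ)))
    = ∑ m ∈ Finset.range (D+1), (Lf m + Lf (D - m) - Lf D) := by
  rw [Finset.Nat.antidiagonalTuple_two, Finset.sum_map]
  rw [Finset.Nat.sum_antidiagonal_eq_sum_range_succ_mk]
  refine Finset.sum_congr rfl fun m _ => ?_
  have h : ∀ a b : ℕ,
      Real.log ((((a.factorial * b.factorial : ℕ)) : ℝ) / (Nat.factorial D : ℝ))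
      = Lf a + Lf b - Lf D := by
    intro a b
    rw [Real.log_div
        (by exact_mod_cast (Nat.mul_pos (Nat.factorial_pos a) (Nat.factorial_pos b)).ne')
        (by exact_mod_cast (Nat.factorial_pos D).ne'), Nat.cast_mul,
      Real.log_mul (by exact_mod_cast (Nat.factorial_pos a).ne')
        (by exact_mod_cast (Nat.factorial_pos b).ne')]
    rfl
  simpa [Fin.prod_univ_two] using h m (D - m)

lemma lemC (D : ℕ) :
    2 * (∑ m ∈ Finset.range (D+1), Lf m) - ((D:ℝ)+1) * Lf D
    = ∑ d ∈ Finset.range (D+1), (Lf d - d * Real.log d) := by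
  induction D with
  | zero => simp [Lf]
  | succ n ih =>
    rw [Finset.sum_range_succ (f := Lf),
      Finset.sum_range_succ (f := fun d => Lf d - d * Real.log d), ← ih, Lf_succ]
    push_cast
    ring

lemma lemB (D : ℕ) :
    ∑ m ∈ Finset.range (D+1), (Lf m + Lf (D - m) - Lf D)
    = ∑ d ∈ Finset.range (D+1), (Lf d - d * Real.log d) := by
  have hrefl : ∑ m ∈ Finset.range (D+1), Lf (D - m) = ∑ m ∈ Finset.range (D+1), Lf m := by
    rw [← Finset.sum_range_reflect]
    refine Finset.sum_congr rfl fun x hx => ?_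
    rw [Finset.mem_range] at hx
    congr 1
    omega
  rw [Finset.sum_sub_distrib, Finset.sum_add_distrib, hrefl, Finset.sum_const,
    Finset.card_range, ← lemC D]
  push_cast [nsmul_eq_mul]
  ring

lemma lemL (D : ℕ) : Lf D = ∑ d ∈ Finset.range (D+1), Real.log d := by
  induction D with
  | zero => simp [Lf]
  | succ n ih => rw [Finset.sum_range_succ, ← ih, Lf_succ]; push_cast; ring

lemma lemG (D : ℕ) : ∑ d ∈ Finset.range (D+1), (d:ℝ) = (D:ℝ) * ((D:ℝ)+1) / 2 := by
  induction D with
  | zero => simp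
  | succ n ih => rw [Finset.sum_range_succ, ih]; push_cast; ring

lemma gg_eq (n : ℕ) (hn : 1 ≤ n) :
    gg n = Real.log (Stirling.stirlingSeq n) - Real.log (Real.sqrt Real.pi) := by
  have hn0 : (0:ℝ) < n := by exact_mod_cast hn
  have hfac : (0:ℝ) < (Nat.factorial n : ℝ) := by exact_mod_cast Nat.factorial_pos n
  have hsq : (0:ℝ) < Real.sqrt (2 * n) := Real.sqrt_pos.2 (by positivity)
  have hpow : (0:ℝ) < ((n:ℝ) / Real.exp 1) ^ n := by positivity
  rw [Stirling.stirlingSeq, Real.log_div hfac.ne' (by positivity),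
    Real.log_mul hsq.ne' hpow.ne', Real.log_sqrt (by positivity), Real.log_pow,
    Real.log_div hn0.ne' (Real.exp_pos 1).ne', Real.log_exp,
    Real.log_mul two_ne_zero hn0.ne', Real.log_sqrt Real.pi_pos.le]
  unfold gg ff Lf
  rw [Real.log_mul two_ne_zero Real.pi_pos.ne']
  ring

lemma gg_tendsto : Tendsto gg atTop (nhds 0) := by
  have hπ : (0:ℝ) < Real.sqrt Real.pi := Real.sqrt_pos.2 Real.pi_pos
  have hlog : Tendsto (fun n => Real.log (Stirling.stirlingSeq n)) atTop
      (nhds (Real.log (Real.sqrt Real.pi))) :=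
    ((Real.continuousAt_log hπ.ne').tendsto).comp Stirling.tendsto_stirlingSeq_sqrt_pi
  have h := hlog.sub_const (Real.log (Real.sqrt Real.pi))
  rw [sub_self] at h
  refine h.congr' ?_
  filter_upwards [eventually_ge_atTop 1] with n hn
  exact (gg_eq n hn).symm

lemma log_div_nat_tendsto : Tendsto (fun n : ℕ => Real.log n / n) atTop (nhds 0) :=
  (Real.isLittleO_log_id_atTop.tendsto_div_nhds_zero).comp tendsto_natCast_atTop_atTop

lemma cesaro_gg : Tendsto (fun D : ℕ => (∑ d ∈ Finset.range (D+1), gg d) / D)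
    atTop (nhds 0) := by
  have h1 : Tendsto (fun n : ℕ => ((n:ℝ))⁻¹ * ∑ i ∈ Finset.range n, gg i) atTop (nhds 0) :=
    gg_tendsto.cesaro
  have h2 := h1.comp (tendsto_add_atTop_nat 1)
  have h3 : Tendsto (fun D : ℕ => ((D:ℝ)+1) / D) atTop (nhds 1) := by
    have := (tendsto_const_nhds : Tendsto (fun _ : ℕ => (1:ℝ)) atTop (nhds 1)).add
      tendsto_inv_atTop_nhds_zero_nat
    rw [add_zero] at this
    refine this.congr' ?_
    filter_upwards [eventually_ge_atTop 1] with D hD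
    have hD0 : (D:ℝ) ≠ 0 := by positivity
    field_simp
  have h4 := h2.mul h3
  rw [zero_mul] at h4
  refine h4.congr' ?_
  filter_upwards [eventually_ge_atTop 1] with D hD
  have hD0 : (D:ℝ) ≠ 0 := by
    have : (1:ℝ) ≤ D := by exact_mod_cast hD
    linarith
  have hD1 : ((D:ℝ)+1) ≠ 0 := by positivity
  simp only [Function.comp_apply]
  push_cast
  field_simp

lemma Cconst_eq (D : ℕ) :
    Cconst 1 D = ∑ d ∈ Finset.range (D+1), (Lf d - d * Real.log d) := by
  rw [← lemB, ← lemA]; rfl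

theorem stmt_16 :
    Filter.Tendsto
      (fun D : ℕ => (Cconst 1 D + (D : ℝ) ^ 2 / 2 - (1 / 2) * (D : ℝ) * Real.log D) / (D : ℝ))
      Filter.atTop (nhds (-1 + (1 / 2) * Real.log (2 * Real.pi))) := by
  set c : ℝ := (1/2) * Real.log (2 * Real.pi) with hc
  -- piecewise limit function
  have T1 := cesaro_gg
  have T2 : Tendsto (fun D : ℕ => ff D / (2 * (D:ℝ))) atTop (nhds 0) := by
    have hgg : Tendsto (fun D : ℕ => gg D * (2 * (D:ℝ))⁻¹) atTop (nhds 0) := by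
      have h := gg_tendsto.mul
        ((tendsto_const_nhds (x := (2:ℝ)⁻¹)).mul tendsto_inv_atTop_nhds_zero_nat)
      rw [zero_mul] at h
      refine h.congr fun D => ?_
      rw [mul_inv]
    have hlg : Tendsto (fun D : ℕ => (1/4) * (Real.log D / D)) atTop (nhds 0) := by
      have := log_div_nat_tendsto.const_mul (1/4 : ℝ)
      rwa [mul_zero] at this
    have hcc : Tendsto (fun D : ℕ => (c/2) * ((D:ℝ))⁻¹) atTop (nhds 0) := by
      have := tendsto_inv_atTop_nhds_zero_nat.const_mul (c/2)
      rwa [mul_zero] at this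
    have h := (hgg.add hlg).add hcc
    rw [add_zero, add_zero] at h
    refine h.congr' ?_
    filter_upwards [eventually_ge_atTop 1] with D hD
    have hD0 : (D:ℝ) ≠ 0 := by
      have : (1:ℝ) ≤ D := by exact_mod_cast hD
      linarith
    have : ff D = gg D + (1/2) * Real.log D + c := by unfold gg; ring
    rw [this]
    field_simp
    ring
  have T4 : Tendsto (fun D : ℕ => c * ((D:ℝ))⁻¹) atTop (nhds 0) := by
    have := tendsto_inv_atTop_nhds_zero_nat.const_mul c
    rwa [mul_zero] at this
  have hlim := ((T1.add T2).add ((tendsto_const_nhds : Tendsto (fun _ : ℕ => (-1 + c : ℝ)) atTop (nhds (-1+c)))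
    )).add T4
  rw [add_zero, zero_add, zero_add] at hlim
  refine hlim.congr' ?_
  filter_upwards [eventually_ge_atTop 1] with D hD
  have hD0 : (D:ℝ) ≠ 0 := by
    have : (1:ℝ) ≤ D := by exact_mod_cast hD
    linarith
  have hsum : ∑ d ∈ Finset.range (D+1), (Lf d - d * Real.log d)
      = (∑ d ∈ Finset.range (D+1), gg d) + (1/2) * Lf D
        + ((D:ℝ)+1) * c - (D:ℝ) * ((D:ℝ)+1) / 2 := by
    have h1 : ∀ d : ℕ, Lf d - d * Real.log d
        = gg d + (1/2) * Real.log d + c - d := by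
      intro d; unfold gg ff; ring
    rw [Finset.sum_congr rfl fun d _ => h1 d]
    rw [Finset.sum_sub_distrib, Finset.sum_add_distrib, Finset.sum_add_distrib,
      ← Finset.mul_sum, ← lemL, Finset.sum_const, Finset.card_range, lemG]
    push_cast [nsmul_eq_mul]
    ring
  rw [Cconst_eq, hsum]
  have hffD : Lf D = ff D + D * Real.log D - D := by unfold ff; ring
  rw [hffD]
  field_simp
  ring
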